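/- Let V_0, V_1, …, V_M be random variables taking values in a common measurable space 𝒳, let T : 𝒳 → ℝ be any measurable function, and define pval = (1 + #{m ∈ {1, …, M} : T(V_m) ≥ T(V_0)})/(M + 1). Then for every α ∈ [0, 1], P(pval ≤ α) ≤ α + d_exch(V_0, V_1, …, V_M). -/

import Mathlib

open MeasureTheory ProbabilityTheory ENNReal

open scoped Classical

noncomputable section

/-- The total variation distance `d_TV(P, Q) = sup_A |P(A) - Q(A)|` between two measures. -/
def tvDist {Ω : Type*} [MeasurableSpace Ω] (P Q : Measure Ω) : ℝ≥0∞ :=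
  ⨆ (s : Set Ω) (_ : MeasurableSet s), (P s - Q s) ⊔ (Q s - P s)

/-- The chi-squared divergence `χ²(Q ‖ P) = ∫ (dQ/dP - 1)² dP` if `Q ≪ P`, and `∞` otherwise. -/
def chiSq {Ω : Type*} [MeasurableSpace Ω] (Q P : Measure Ω) : ℝ≥0∞ :=
  if Q ≪ P then ∫⁻ ω, ((Q.rnDeriv P ω - 1) ⊔ (1 - Q.rnDeriv P ω)) ^ 2 ∂P else ⊤

/-- A measure on `Fin n → 𝒳` is exchangeable if it is invariant under every permutation of the
coordinates. -/
def Exchangeable {𝒳 : Type*} [MeasurableSpace 𝒳] {n : ℕ} (Q : Measure (Fin n → 𝒳)) : Prop :=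
  ∀ σ : Equiv.Perm (Fin n), Measure.map (fun v => v ∘ σ) Q = Q

/-- The distance to exchangeability: the infimum, over exchangeable probability measures `Q`,
of the total variation distance to `Q`. -/
def dExch {𝒳 : Type*} [MeasurableSpace 𝒳] {n : ℕ} (P : Measure (Fin n → 𝒳)) : ℝ≥0∞ :=
  ⨅ (Q : Measure (Fin n → 𝒳)) (_ : IsProbabilityMeasure Q) (_ : Exchangeable Q), tvDist P Q

/-- The p-value `(1 + #{m : T(v (m+1)) ≥ T(v 0)}) / (M + 1)`, where `v 0` is the data and
`v 1, …, v M` are the copies. -/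
def pval {𝒳 : Type*} {M : ℕ} (T : 𝒳 → ℝ) (v : Fin (M + 1) → 𝒳) : ℝ :=
  (1 + ((Finset.univ.filter fun m : Fin M => T (v 0) ≤ T (v m.succ)).card : ℝ)) / (M + 1)

namespace PvalAux

variable {𝒳 : Type*} [MeasurableSpace 𝒳] {M : ℕ}

def cnt (T : 𝒳 → ℝ) (i : Fin (M+1)) (v : Fin (M+1) → 𝒳) : ℕ :=
  (Finset.univ.filter fun m : Fin (M+1) => T (v i) ≤ T (v m)).card

lemma cnt_zero (T : 𝒳 → ℝ) (v : Fin (M+1) → 𝒳) :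
    cnt T 0 v = 1 + (Finset.univ.filter fun m : Fin M => T (v 0) ≤ T (v m.succ)).card := by
  unfold cnt
  rw [Finset.card_filter, Finset.card_filter, Fin.sum_univ_succ, if_pos le_rfl]

lemma pval_eq (T : 𝒳 → ℝ) (v : Fin (M+1) → 𝒳) :
    pval T v = (cnt T 0 v : ℝ) / (M+1) := by
  rw [pval, cnt_zero]
  push_cast
  ring_nf

lemma measurable_cnt (T : 𝒳 → ℝ) (hT : Measurable T) (i : Fin (M+1)) :
    Measurable fun v : Fin (M+1) → 𝒳 => cnt T i v := by
  unfold cnt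
  simp_rw [Finset.card_filter]
  exact Finset.measurable_sum _ fun m _ =>
    Measurable.ite (measurableSet_le (hT.comp (measurable_pi_apply i))
      (hT.comp (measurable_pi_apply m))) measurable_const measurable_const

lemma card_small_le (T : 𝒳 → ℝ) (v : Fin (M+1) → 𝒳) (k : ℕ) :
    (Finset.univ.filter fun i : Fin (M+1) => cnt T i v ≤ k).card ≤ k := by
  set S := Finset.univ.filter fun i : Fin (M+1) => cnt T i v ≤ k with hS
  rcases S.eq_empty_or_nonempty with h | h
  · simp [h]
  · obtain ⟨i, hiS, hmin⟩ := S.exists_min_image (fun i => T (v i)) h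
    have h1 : S ⊆ Finset.univ.filter fun m => T (v i) ≤ T (v m) := by
      intro j hj
      simp only [Finset.mem_filter, Finset.mem_univ, true_and]
      exact hmin j hj
    have h2 : cnt T i v ≤ k := (Finset.mem_filter.mp hiS).2
    exact le_trans (Finset.card_le_card h1) h2

lemma cnt_comp (T : 𝒳 → ℝ) (σ : Equiv.Perm (Fin (M+1))) (i : Fin (M+1)) (v : Fin (M+1) → 𝒳) :
    cnt T i (v ∘ σ) = cnt T (σ i) v := by
  unfold cnt
  rw [Finset.card_filter, Finset.card_filter]
  exact Equiv.sum_comp σ fun m => if T (v (σ i)) ≤ T (v m) then 1 else 0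

lemma exch_meas_eq {Q : Measure (Fin (M+1) → 𝒳)} (hQ : Exchangeable Q)
    (T : 𝒳 → ℝ) (hT : Measurable T) (k : ℕ) (i : Fin (M+1)) :
    Q {v | cnt T i v ≤ k} = Q {v | cnt T 0 v ≤ k} := by
  set σ := Equiv.swap (0 : Fin (M+1)) i with hσ
  have hmeas : Measurable fun v : Fin (M+1) → 𝒳 => v ∘ σ :=
    measurable_pi_lambda _ fun m => measurable_pi_apply (σ m)
  have hset : MeasurableSet {v : Fin (M+1) → 𝒳 | cnt T i v ≤ k} :=
    measurable_cnt T hT i measurableSet_Iic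
  calc Q {v | cnt T i v ≤ k}
      = Measure.map (fun v => v ∘ σ) Q {v | cnt T i v ≤ k} := by rw [hQ σ]
    _ = Q ((fun v => v ∘ σ) ⁻¹' {v | cnt T i v ≤ k}) := Measure.map_apply hmeas hset
    _ = Q {v | cnt T 0 v ≤ k} := by
        congr 1
        ext v
        simp only [Set.mem_preimage, Set.mem_setOf_eq, cnt_comp, hσ, Equiv.swap_apply_right]

lemma exch_bound {Q : Measure (Fin (M+1) → 𝒳)} [IsProbabilityMeasure Q]
    (hQ : Exchangeable Q) (T : 𝒳 → ℝ) (hT : Measurable T) (k : ℕ) :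
    (M + 1 : ℝ≥0∞) * Q {v | cnt T 0 v ≤ k} ≤ k := by
  have h1 : ∀ i : Fin (M+1), Q {v | cnt T i v ≤ k}
      = ∫⁻ v, (if cnt T i v ≤ k then 1 else 0) ∂Q := by
    intro i
    have hset : MeasurableSet {v : Fin (M+1) → 𝒳 | cnt T i v ≤ k} :=
      measurable_cnt T hT i measurableSet_Iic
    rw [← lintegral_indicator_one hset]
    congr 1; ext v
    by_cases h : cnt T i v ≤ k <;> simp [Set.indicator, h]
  have hsum : ∑ i : Fin (M+1), Q {v | cnt T i v ≤ k} ≤ k := by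
    calc ∑ i : Fin (M+1), Q {v | cnt T i v ≤ k}
        = ∫⁻ v, ∑ i : Fin (M+1), (if cnt T i v ≤ k then (1:ℝ≥0∞) else 0) ∂Q := by
          simp_rw [h1]
          rw [lintegral_finset_sum]
          intro i _
          exact Measurable.ite (measurable_cnt T hT i measurableSet_Iic)
            measurable_const measurable_const
      _ ≤ ∫⁻ _, (k : ℝ≥0∞) ∂Q := by
          refine lintegral_mono fun v => ?_
          have hcard : ∑ i : Fin (M+1), (if cnt T i v ≤ k then (1:ℝ≥0∞) else 0)
              = ((Finset.univ.filter fun i : Fin (M+1) => cnt T i v ≤ k).card : ℝ≥0∞) := by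
            rw [Finset.card_filter, Nat.cast_sum]
            exact Finset.sum_congr rfl fun i _ => by split <;> simp
          rw [hcard]
          exact Nat.cast_le.mpr (by convert card_small_le T v k)
      _ = k := by simp
  calc (M + 1 : ℝ≥0∞) * Q {v | cnt T 0 v ≤ k}
      = ∑ _i : Fin (M+1), Q {v | cnt T 0 v ≤ k} := by
        rw [Finset.sum_const, Finset.card_univ, Fintype.card_fin, nsmul_eq_mul]
        push_cast
        ring
    _ = ∑ i : Fin (M+1), Q {v | cnt T i v ≤ k} :=
        Finset.sum_congr rfl fun i _ => (exch_meas_eq hQ T hT k i).symm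
    _ ≤ k := hsum

end PvalAux


open PvalAux

/-- **p-value validity up to distance to exchangeability.** For random variables
`V_0, V_1, …, V_M` with joint law `P` on `𝒳^{M+1}`, any measurable statistic `T`, and any
`α ∈ [0,1]`, the p-value `(1 + #{m : T(V_m) ≥ T(V_0)})/(M+1)` satisfies
`P(pval ≤ α) ≤ α + d_exch(V_0, …, V_M)`. -/
theorem pval_le_alpha_add_dExch
    {𝒳 : Type*} [MeasurableSpace 𝒳] {M : ℕ}
    (P : Measure (Fin (M + 1) → 𝒳)) [IsProbabilityMeasure P]
    (T : 𝒳 → ℝ) (hT : Measurable T) (α : ℝ) (hα0 : 0 ≤ α) (hα1 : α ≤ 1) :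
    P {v | pval T v ≤ α} ≤ ENNReal.ofReal α + dExch P := by
  set k := ⌊α * (M + 1)⌋₊ with hk
  have hAset : {v : Fin (M+1) → 𝒳 | pval T v ≤ α} = {v | cnt T 0 v ≤ k} := by
    ext v
    simp only [Set.mem_setOf_eq, pval_eq]
    rw [div_le_iff₀ (by positivity), hk, Nat.le_floor_iff (by positivity)]
  have hA : MeasurableSet {v : Fin (M+1) → 𝒳 | cnt T 0 v ≤ k} :=
    measurable_cnt T hT 0 measurableSet_Iic
  have key : ∀ Q : Measure (Fin (M+1) → 𝒳), IsProbabilityMeasure Q → Exchangeable Q →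
      Q {v | cnt T 0 v ≤ k} ≤ ENNReal.ofReal α := by
    intro Q hprob hexch
    haveI := hprob
    have hb := exch_bound hexch T hT k
    have hk' : (k : ℝ≥0∞) ≤ (M + 1 : ℝ≥0∞) * ENNReal.ofReal α := by
      have h1 : (k : ℝ) ≤ α * (M + 1) := Nat.floor_le (by positivity)
      calc (k : ℝ≥0∞) = ENNReal.ofReal (k : ℝ) := by simp
        _ ≤ ENNReal.ofReal (α * ((M:ℝ) + 1)) := ENNReal.ofReal_le_ofReal h1
        _ = ENNReal.ofReal α * ENNReal.ofReal ((M:ℝ) + 1) := ENNReal.ofReal_mul hα0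
        _ = (M + 1 : ℝ≥0∞) * ENNReal.ofReal α := by
            rw [mul_comm]
            congr 1
            rw [ENNReal.ofReal_add (by positivity) zero_le_one, ENNReal.ofReal_natCast,
              ENNReal.ofReal_one]
    have hcomb := le_trans hb hk'
    have hne : (M + 1 : ℝ≥0∞) ≠ 0 := by simp
    have htop : (M + 1 : ℝ≥0∞) ≠ ⊤ := by simp
    exact (ENNReal.mul_le_mul_iff_right hne htop).mp hcomb
  rw [hAset, ← tsub_le_iff_left]
  refine le_iInf fun Q => le_iInf fun hprob => le_iInf fun hexch => ?_
  rw [tsub_le_iff_left]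
  have htv : P {v | cnt T 0 v ≤ k} - Q {v | cnt T 0 v ≤ k} ≤ tvDist P Q := by
    refine le_trans ?_ (le_iSup₂ (f := fun s (_ : MeasurableSet s) =>
      (P s - Q s) ⊔ (Q s - P s)) {v | cnt T 0 v ≤ k} hA)
    exact le_sup_left
  calc P {v | cnt T 0 v ≤ k}
      ≤ Q {v | cnt T 0 v ≤ k} + (P {v | cnt T 0 v ≤ k} - Q {v | cnt T 0 v ≤ k}) :=
        le_add_tsub
    _ ≤ ENNReal.ofReal α + tvDist P Q := add_le_add (key Q hprob hexch) htv
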